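/- Let S be a nearest-neighbor path on ℤ and T(k,n) = k·∑_{x∈ℤ} T(k,kx,n). If k, k' are positive integers with 2k ≤ k', then T(k', n) ≤ 3·T(k, n). -/
import Mathlib


open scoped Classical ENNReal

/-- The number of `k`-excursions of the path `S` starting from `x` completed by time `n`. -/
noncomputable def excCount (S : ℕ → ℤ) (k : ℕ) (x : ℤ) (n : ℕ) : ℕ :=
  ((Finset.range (n + 1)).filter (fun j =>
    S j = x ∧ ∃ t, j < t ∧ t ≤ n ∧ S t = x - (k : ℤ) ∧
      ∀ u, j < u → u < t → S u ≠ x)).card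

/-- `T(k,n) = k ∑_{x ∈ ℤ} T(k, kx, n)`. -/
noncomputable def excTotal (S : ℕ → ℤ) (k : ℕ) (n : ℕ) : ℝ≥0∞ :=
  (k : ℝ≥0∞) * ∑' x : ℤ, (excCount S k ((k : ℤ) * x) n : ℝ≥0∞)

/-- A completed `K`-excursion of `S` from `x` starting at time `j` (by time `n`). -/
def IsExc (S : ℕ → ℤ) (K n : ℕ) (x : ℤ) (j : ℕ) : Prop :=
  j ≤ n ∧ S j = x ∧ ∃ t, j < t ∧ t ≤ n ∧ S t = x - (K : ℤ) ∧ ∀ u, j < u → u < t → S u ≠ x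

/-- Discrete intermediate value theorem for nearest-neighbour paths. -/
lemma nn_ivt (S : ℕ → ℤ) (hS : ∀ t, (S (t + 1) - S t).natAbs = 1)
    {a b : ℕ} (hab : a ≤ b) {y : ℤ} (ha : y ≤ S a) (hb : S b ≤ y) :
    ∃ u, a ≤ u ∧ u ≤ b ∧ S u = y := by
  classical
  set T : Finset ℕ := (Finset.Icc a b).filter (fun u => y ≤ S u) with hT
  have hne : T.Nonempty := ⟨a, by simp [hT, hab, ha]⟩
  set u := T.max' hne with hu
  have huT : u ∈ T := T.max'_mem hne
  simp only [hT, Finset.mem_filter, Finset.mem_Icc] at huT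
  refine ⟨u, huT.1.1, huT.1.2, ?_⟩
  by_contra hne'
  have hlt : y < S u := lt_of_le_of_ne huT.2 (Ne.symm hne')
  have hub : u ≠ b := by intro he; rw [he] at hlt; omega
  have hub' : u + 1 ≤ b := Nat.succ_le_of_lt (lt_of_le_of_ne huT.1.2 hub)
  have hstep := hS u
  rw [Int.natAbs_eq_iff] at hstep
  have hy1 : y ≤ S (u + 1) := by rcases hstep with h | h <;> omega
  have : u + 1 ∈ T := by
    simp only [hT, Finset.mem_filter, Finset.mem_Icc]
    exact ⟨⟨le_trans huT.1.1 (Nat.le_succ u), hub'⟩, hy1⟩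
  have := T.le_max' _ this
  omega

/-- The (least) end time of the excursion started at `j`. -/
noncomputable def excEnd (S : ℕ → ℤ) (K n : ℕ) (x : ℤ) (j : ℕ) : ℕ :=
  if h : ∃ t, j < t ∧ t ≤ n ∧ S t = x - (K : ℤ) ∧ ∀ u, j < u → u < t → S u ≠ x then
    Nat.find h else 0

lemma excEnd_spec {S : ℕ → ℤ} {K n : ℕ} {x : ℤ} {j : ℕ} (h : IsExc S K n x j) :
    j < excEnd S K n x j ∧ excEnd S K n x j ≤ n ∧ S (excEnd S K n x j) = x - (K : ℤ) ∧
      ∀ u, j < u → u < excEnd S K n x j → S u ≠ x := by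
  rw [excEnd, dif_pos h.2.2]
  exact Nat.find_spec h.2.2

/-- Last visit to level `y` in `[j, t)`. -/
noncomputable def lastVis (S : ℕ → ℤ) (j t : ℕ) (y : ℤ) : ℕ :=
  ((Finset.Ico j t).filter (fun u => S u = y)).sup id

lemma lastVis_mem {S : ℕ → ℤ} {j t : ℕ} {y : ℤ} {u₀ : ℕ}
    (h : u₀ ∈ (Finset.Ico j t).filter (fun u => S u = y)) :
    j ≤ lastVis S j t y ∧ lastVis S j t y < t ∧ S (lastVis S j t y) = y := by
  obtain ⟨i, hi, hsup⟩ := Finset.exists_mem_eq_sup _ ⟨u₀, h⟩ (id : ℕ → ℕ)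
  rw [lastVis, hsup]
  simp only [Finset.mem_filter, Finset.mem_Ico] at hi
  exact ⟨hi.1.1, hi.1.2, hi.2⟩

lemma lastVis_le {S : ℕ → ℤ} {j t : ℕ} {y : ℤ} {u : ℕ}
    (hu1 : j ≤ u) (hu2 : u < t) (hu3 : S u = y) : u ≤ lastVis S j t y :=
  Finset.le_sup (f := id) (by simp [Finset.mem_filter, Finset.mem_Ico, hu1, hu2, hu3])

/-- The largest multiple of `k` below `k' x`, divided by `k`. -/
noncomputable def qf (k k' : ℕ) (x : ℤ) : ℤ := ((k' : ℤ) * x) / k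

/-- The `i`-th multiple of `k` below `k' x` (counting down). -/
noncomputable def yf (k k' : ℕ) (x : ℤ) (i : ℕ) : ℤ := (k : ℤ) * qf k k' x - (k : ℤ) * (i : ℤ)

lemma qf_bounds (k k' : ℕ) (hk : 1 ≤ k) (x : ℤ) :
    (k' : ℤ) * x - k < (k : ℤ) * qf k k' x ∧ (k : ℤ) * qf k k' x ≤ (k' : ℤ) * x := by
  have h := Int.mul_ediv_add_emod ((k' : ℤ) * x) k
  have hkz : (k : ℤ) ≠ 0 := by positivity
  have h1 := Int.emod_nonneg ((k' : ℤ) * x) hkz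
  have h2 := Int.emod_lt_of_pos ((k' : ℤ) * x) (show (0 : ℤ) < k by exact_mod_cast hk)
  unfold qf
  constructor <;> linarith

lemma yf_bounds (k k' : ℕ) (hk : 1 ≤ k) (hkk' : 2 * k ≤ k') (x : ℤ) (i : ℕ)
    (hi : i < k' / k - 1) :
    (k' : ℤ) * x - k' < yf k k' x i - k ∧ yf k k' x i ≤ (k' : ℤ) * x := by
  have hq := qf_bounds k k' hk x
  have hm2 : 2 ≤ k' / k := (Nat.le_div_iff_mul_le (by omega)).mpr (by omega)
  have hkm : k * (k' / k) ≤ k' := Nat.mul_div_le k' k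
  have hiz : (i : ℤ) ≤ (k' / k : ℕ) - 2 := by omega
  have hkmz : (k : ℤ) * (k' / k : ℕ) ≤ (k' : ℤ) := by exact_mod_cast hkm
  have hk0 : (0 : ℤ) ≤ k := by positivity
  have hmul : (k : ℤ) * (i : ℤ) ≤ (k : ℤ) * ((k' / k : ℕ) - 2) :=
    mul_le_mul_of_nonneg_left hiz hk0
  have hi0 : (0 : ℤ) ≤ (k : ℤ) * (i : ℤ) := by positivity
  unfold yf
  constructor <;> nlinarith [hq.1, hq.2]

/-- The `i`-th small excursion extracted from a big excursion. -/
lemma exc_step (S : ℕ → ℤ) (hS : ∀ t, (S (t + 1) - S t).natAbs = 1)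
    (k k' n : ℕ) (hk : 1 ≤ k) (hkk' : 2 * k ≤ k') (x : ℤ) (j : ℕ)
    (h : IsExc S k' n ((k' : ℤ) * x) j) (i : ℕ) (hi : i < k' / k - 1) :
    IsExc S k n ((k : ℤ) * (qf k k' x - (i : ℤ)))
        (lastVis S j (excEnd S k' n ((k' : ℤ) * x) j) (yf k k' x i)) ∧
      j ≤ lastVis S j (excEnd S k' n ((k' : ℤ) * x) j) (yf k k' x i) ∧
      lastVis S j (excEnd S k' n ((k' : ℤ) * x) j) (yf k k' x i) <
        excEnd S k' n ((k' : ℤ) * x) j := by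
  obtain ⟨ht1, ht2, ht3, ht4⟩ := excEnd_spec h
  set t := excEnd S k' n ((k' : ℤ) * x) j with htdef
  set y := yf k k' x i with hydef
  have hb := yf_bounds k k' hk hkk' x i hi
  have hk0 : (0 : ℤ) < k := by exact_mod_cast hk
  obtain ⟨u, hu1, hu2, hu3⟩ :=
    nn_ivt S hS (le_of_lt ht1) (show y ≤ S j by rw [h.2.1]; exact hb.2)
      (show S t ≤ y by rw [ht3]; linarith [hb.1])
  have hut : u ≠ t := by
    intro he; rw [he, ht3] at hu3; linarith [hb.1]
  have humem : u ∈ (Finset.Ico j t).filter (fun v => S v = y) := by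
    simp only [Finset.mem_filter, Finset.mem_Ico]
    exact ⟨⟨hu1, lt_of_le_of_ne hu2 hut⟩, hu3⟩
  obtain ⟨hw1, hw2, hw3⟩ := lastVis_mem humem
  set w := lastVis S j t y with hwdef
  obtain ⟨v, hv1, hv2, hv3⟩ :=
    nn_ivt S hS (le_of_lt hw2) (show y - k ≤ S w by rw [hw3]; linarith)
      (show S t ≤ y - k by rw [ht3]; linarith [hb.1])
  have hvw : w < v := by
    rcases lt_or_eq_of_le hv1 with h' | h'
    · exact h'
    · exfalso; rw [← h', hw3] at hv3; omega
  have hvt : v < t := by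
    rcases lt_or_eq_of_le hv2 with h' | h'
    · exact h'
    · exfalso; rw [h', ht3] at hv3; linarith [hb.1]
  have hex : ∃ v', w < v' ∧ S v' = y - k := ⟨v, hvw, hv3⟩
  obtain ⟨ht'1, ht'2⟩ := Nat.find_spec hex
  have ht't : Nat.find hex < t := lt_of_le_of_lt (Nat.find_min' hex ⟨hvw, hv3⟩) hvt
  have hY : (k : ℤ) * (qf k k' x - (i : ℤ)) = y := by rw [hydef]; unfold yf; ring
  refine ⟨⟨by omega, by rw [hY]; exact hw3, Nat.find hex, ht'1, by omega,
    by rw [hY]; exact ht'2, ?_⟩, hw1, hw2⟩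
  intro u' hu'1 hu'2 hu'3
  rw [hY] at hu'3
  have : u' ≤ w := lastVis_le (le_trans hw1 (le_of_lt hu'1)) (by omega) hu'3
  omega

/-- The key injection: each big excursion contains `k'/k - 1` distinct small excursions,
    and the extracted data determines the big excursion. -/
lemma key_inj (S : ℕ → ℤ) (hS : ∀ t, (S (t + 1) - S t).natAbs = 1)
    (k k' n : ℕ) (hk : 1 ≤ k) (hkk' : 2 * k ≤ k') :
    ∃ Φ : ({p : ℤ × ℕ // IsExc S k' n ((k' : ℤ) * p.1) p.2} × Fin (k' / k - 1)) →
      {p : ℤ × ℕ // IsExc S k n ((k : ℤ) * p.1) p.2}, Function.Injective Φ := by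
  classical
  refine ⟨fun p =>
    ⟨(qf k k' p.1.1.1 - ((p.2 : ℕ) : ℤ),
      lastVis S p.1.1.2 (excEnd S k' n ((k' : ℤ) * p.1.1.1) p.1.1.2) (yf k k' p.1.1.1 p.2)),
      (exc_step S hS k k' n hk hkk' p.1.1.1 p.1.1.2 p.1.2 p.2 p.2.2).1⟩, ?_⟩
  rintro ⟨⟨⟨x1, j1⟩, h1⟩, i1⟩ ⟨⟨⟨x2, j2⟩, h2⟩, i2⟩ he
  simp only [Subtype.mk.injEq, Prod.mk.injEq] at he
  obtain ⟨hz, hw⟩ := he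
  have hk'0 : (0 : ℤ) < k' := by exact_mod_cast (by omega : 0 < k')
  have ye : ∀ (x : ℤ) (a : ℕ), yf k k' x a = (k : ℤ) * (qf k k' x - (a : ℤ)) := by
    intro x a; unfold yf; ring
  have hyeq : yf k k' x1 i1 = yf k k' x2 i2 := by rw [ye, ye, hz]
  have hb1 := yf_bounds k k' hk hkk' x1 i1 i1.2
  have hb2 := yf_bounds k k' hk hkk' x2 i2 i2.2
  rw [hyeq] at hb1
  have hk0 : (0 : ℤ) ≤ k := by positivity
  have hx : x1 = x2 := by
    have l1 : (k' : ℤ) * x1 < k' * (x2 + 1) := by nlinarith [hb1.1, hb2.2]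
    have l2 : (k' : ℤ) * x2 < k' * (x1 + 1) := by nlinarith [hb2.1, hb1.2]
    have r1 : x1 < x2 + 1 := lt_of_mul_lt_mul_left l1 (le_of_lt hk'0)
    have r2 : x2 < x1 + 1 := lt_of_mul_lt_mul_left l2 (le_of_lt hk'0)
    omega
  subst hx
  have hii : i1 = i2 := by
    have : ((i1 : ℕ) : ℤ) = ((i2 : ℕ) : ℤ) := by omega
    exact Fin.ext (by exact_mod_cast this)
  subst hii
  rw [hyeq] at hw
  have hj : j1 = j2 := by
    by_contra hne
    have key : ∀ (j j' : ℕ), IsExc S k' n ((k' : ℤ) * x1) j → IsExc S k' n ((k' : ℤ) * x1) j' →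
        j < j' →
        lastVis S j (excEnd S k' n ((k' : ℤ) * x1) j) (yf k k' x1 i1) ≠
        lastVis S j' (excEnd S k' n ((k' : ℤ) * x1) j') (yf k k' x1 i1) := by
      intro j j' hj hj' hlt heq
      obtain ⟨ht1, ht2, ht3, ht4⟩ := excEnd_spec hj
      obtain ⟨_, hA2, hA3⟩ := exc_step S hS k k' n hk hkk' x1 j hj i1 i1.2
      obtain ⟨_, hB2, hB3⟩ := exc_step S hS k k' n hk hkk' x1 j' hj' i1 i1.2
      have hj't : excEnd S k' n ((k' : ℤ) * x1) j ≤ j' := by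
        by_contra h'
        push_neg at h'
        exact ht4 j' hlt h' hj'.2.1
      omega
    rcases Nat.lt_or_ge j1 j2 with h' | h'
    · exact key j1 j2 h1 h2 h' hw
    · exact key j2 j1 h2 h1 (by omega) hw.symm
  subst hj
  rfl

lemma tsum_exc (S : ℕ → ℤ) (K n : ℕ) :
    ∑' p : {p : ℤ × ℕ // IsExc S K n ((K : ℤ) * p.1) p.2}, (1 : ℝ≥0∞) =
      ∑' x : ℤ, (excCount S K ((K : ℤ) * x) n : ℝ≥0∞) := by
  classical
  show ∑' p : ↑{p : ℤ × ℕ | IsExc S K n ((K : ℤ) * p.1) p.2}, (1 : ℝ≥0∞) = _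
  rw [tsum_subtype {p : ℤ × ℕ | IsExc S K n ((K : ℤ) * p.1) p.2} (fun _ => (1 : ℝ≥0∞)),
    ENNReal.tsum_prod']
  refine tsum_congr (fun x => ?_)
  have step1 : ∑' (j : ℕ),
      Set.indicator {p : ℤ × ℕ | IsExc S K n ((K : ℤ) * p.1) p.2} (fun _ => (1 : ℝ≥0∞)) (x, j) =
      ∑ j ∈ Finset.range (n + 1),
        Set.indicator {p : ℤ × ℕ | IsExc S K n ((K : ℤ) * p.1) p.2} (fun _ => (1 : ℝ≥0∞)) (x, j) := by
    refine tsum_eq_sum (fun j hj => ?_)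
    simp only [Finset.mem_range] at hj
    refine Set.indicator_of_notMem ?_ _
    simp only [Set.mem_setOf_eq, IsExc]
    intro hcon
    omega
  rw [step1]
  have step3 : (excCount S K ((K : ℤ) * x) n : ℝ≥0∞) =
      ∑ j ∈ Finset.range (n + 1),
        (if (S j = (K : ℤ) * x ∧ ∃ t, j < t ∧ t ≤ n ∧ S t = (K : ℤ) * x - (K : ℤ) ∧
          ∀ u, j < u → u < t → S u ≠ (K : ℤ) * x) then (1 : ℝ≥0∞) else 0) := by
    rw [excCount, Finset.card_filter]
    push_cast
    simp
  rw [step3]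
  refine Finset.sum_congr rfl (fun j hj => ?_)
  simp only [Finset.mem_range] at hj
  have hjn : j ≤ n := by omega
  simp [Set.indicator_apply, Set.mem_setOf_eq, IsExc, hjn]

lemma tsum_one_prod_fin (α : Type*) (r : ℕ) :
    ∑' _ : α × Fin r, (1 : ℝ≥0∞) = (r : ℝ≥0∞) * ∑' _ : α, (1 : ℝ≥0∞) := by
  rw [ENNReal.tsum_prod']
  calc ∑' (_ : α) (_ : Fin r), (1 : ℝ≥0∞) = ∑' (_ : α), (r : ℝ≥0∞) :=
        tsum_congr (fun a => by rw [tsum_fintype]; simp)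
    _ = (r : ℝ≥0∞) * ∑' (_ : α), 1 := by rw [← ENNReal.tsum_mul_left]; simp

/-- Almost-monotonicity of `T(k,n)`: if `2k ≤ k'` then `T(k', n) ≤ 3 T(k, n)`, for every
nearest-neighbor path on `ℤ`. -/
theorem excTotal_almost_monotone (S : ℕ → ℤ) (hS : ∀ t, (S (t + 1) - S t).natAbs = 1)
    (k k' n : ℕ) (hk : 1 ≤ k) (hkk' : 2 * k ≤ k') :
    excTotal S k' n ≤ 3 * excTotal S k n := by
  classical
  obtain ⟨Φ, hΦ⟩ := key_inj S hS k k' n hk hkk'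
  have hle := ENNReal.tsum_comp_le_tsum_of_injective hΦ (fun _ => (1 : ℝ≥0∞))
  rw [tsum_one_prod_fin] at hle
  have hnat : k' ≤ 3 * k * (k' / k - 1) := by
    have hdm := Nat.div_add_mod k' k
    have hmod : k' % k < k := Nat.mod_lt _ (by omega)
    have hm2 : 2 ≤ k' / k := (Nat.le_div_iff_mul_le (by omega)).mpr (by omega)
    obtain ⟨a, ha⟩ : ∃ a, k' / k = a + 2 := ⟨k' / k - 2, by omega⟩
    rw [ha] at hdm ⊢
    have h21 : a + 2 - 1 = a + 1 := by omega
    rw [h21]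
    nlinarith
  calc excTotal S k' n
      = (k' : ℝ≥0∞) * ∑' p : {p : ℤ × ℕ // IsExc S k' n ((k' : ℤ) * p.1) p.2}, 1 := by
        rw [excTotal, tsum_exc]
    _ ≤ ((3 * k * (k' / k - 1) : ℕ) : ℝ≥0∞) *
          ∑' p : {p : ℤ × ℕ // IsExc S k' n ((k' : ℤ) * p.1) p.2}, 1 :=
        mul_le_mul_left (by exact_mod_cast Nat.cast_le.mpr hnat) _
    _ = 3 * (k : ℝ≥0∞) * (((k' / k - 1 : ℕ) : ℝ≥0∞) *
          ∑' p : {p : ℤ × ℕ // IsExc S k' n ((k' : ℤ) * p.1) p.2}, 1) := by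
        push_cast
        ring
    _ ≤ 3 * (k : ℝ≥0∞) * ∑' p : {p : ℤ × ℕ // IsExc S k n ((k : ℤ) * p.1) p.2}, 1 :=
        mul_le_mul_right hle _
    _ = 3 * excTotal S k n := by
        rw [excTotal, tsum_exc]
        ring
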